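/- Suppose $(W(T;u,W_0))$ denotes a control system on a Banach space $X$ with, for each admissible control $u$ on $[0,T]$, a continuous map $W(T;u,\cdot): X \to X$, and say a bounded operator $L$ on $X$ is STAR if for every $W_0 \in X$ and $\epsilon > 0$ there exist $T \in [0,\epsilon]$ and a control $u$ with $\|W(T;u,W_0) - LW_0\| < \epsilon$, and suppose the system allows concatenation of controls (with times adding). Then: (1) the composition $L_2 L_1$ of two STAR operators is STAR; (2) if $(L_n)$ are STAR operators converging strongly to a bounded operator $L$, then $L$ is STAR. -/
import Mathlib


open Filter Topology

/-- A bounded operator `L` on `X` is small-time approximately reachable (STAR) for the control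
system `(time, W)`: for every initial state `W₀` and every `ε > 0` there is a control `u` with
duration `time u ∈ [0, ε]` such that `‖W(u, W₀) - L W₀‖ < ε`. -/
def IsSTAR {X U : Type*} [NormedAddCommGroup X]
    (time : U → ℝ) (W : U → X → X) (L : X → X) : Prop :=
  ∀ (W0 : X) (ε : ℝ), 0 < ε → ∃ u : U, time u ∈ Set.Icc (0:ℝ) ε ∧ ‖W u W0 - L W0‖ < ε

/-- For a control system on a Banach space whose flow maps are continuous and
which allows concatenation of controls (durations adding), (1) the composition of two STAR
bounded operators is STAR, and (2) a strong limit of STAR operators is STAR. -/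
theorem stmt19 {X U : Type*} [NormedAddCommGroup X] [NormedSpace ℝ X]
    (time : U → ℝ) (W : U → X → X)
    (hcont : ∀ u, Continuous (W u))
    (hconcat : ∀ u1 u2 : U, ∃ u : U,
      time u = time u1 + time u2 ∧ ∀ x, W u x = W u2 (W u1 x)) :
    (∀ L1 L2 : X →L[ℝ] X, IsSTAR time W L1 → IsSTAR time W L2 →
      IsSTAR time W (fun x => L2 (L1 x))) ∧
    (∀ (L : ℕ → X →L[ℝ] X) (L' : X →L[ℝ] X),
      (∀ n, IsSTAR time W (L n)) →
      (∀ x, Tendsto (fun n => L n x) atTop (𝓝 (L' x))) →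
      IsSTAR time W L') := by
  constructor
  · intro L1 L2 h1 h2 W0 ε hε
    obtain ⟨u2, ht2, hn2⟩ := h2 (L1 W0) (ε / 2) (by linarith)
    have hc : ContinuousAt (W u2) (L1 W0) := (hcont u2).continuousAt
    rw [Metric.continuousAt_iff] at hc
    obtain ⟨δ, hδ, hδ'⟩ := hc (ε / 2) (by linarith)
    obtain ⟨u1, ht1, hn1⟩ := h1 W0 (min δ (ε / 2)) (by positivity)
    obtain ⟨u, htu, hWu⟩ := hconcat u1 u2
    refine ⟨u, ⟨by rw [htu]; exact add_nonneg ht1.1 ht2.1, ?_⟩, ?_⟩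
    · rw [htu]
      have := ht1.2
      have := ht2.2
      have : min δ (ε / 2) ≤ ε / 2 := min_le_right _ _
      linarith [ht1.2, ht2.2]
    · rw [hWu]
      have hd : dist (W u1 W0) (L1 W0) < δ := by
        rw [dist_eq_norm]
        exact lt_of_lt_of_le hn1 (min_le_left _ _)
      have h3 : dist (W u2 (W u1 W0)) (W u2 (L1 W0)) < ε / 2 := hδ' hd
      calc ‖W u2 (W u1 W0) - L2 (L1 W0)‖
          ≤ ‖W u2 (W u1 W0) - W u2 (L1 W0)‖ + ‖W u2 (L1 W0) - L2 (L1 W0)‖ :=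
            norm_sub_le_norm_sub_add_norm_sub _ _ _
        _ < ε / 2 + ε / 2 := by
            rw [dist_eq_norm] at h3; exact add_lt_add h3 hn2
        _ = ε := by ring
  · intro L L' hL hlim W0 ε hε
    have := (hlim W0).eventually (Metric.ball_mem_nhds (L' W0) (show (0:ℝ) < ε / 2 by linarith))
    obtain ⟨n, hn⟩ := this.exists
    obtain ⟨u, htu, hnu⟩ := hL n W0 (ε / 2) (by linarith)
    refine ⟨u, ⟨htu.1, by linarith [htu.2]⟩, ?_⟩
    have hn' : ‖L n W0 - L' W0‖ < ε / 2 := by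
      rw [← dist_eq_norm]; exact hn
    calc ‖W u W0 - L' W0‖
        ≤ ‖W u W0 - L n W0‖ + ‖L n W0 - L' W0‖ := norm_sub_le_norm_sub_add_norm_sub _ _ _
      _ < ε / 2 + ε / 2 := add_lt_add hnu hn'
      _ = ε := by ring
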